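/- The simplex Δ = convexHull ℝ {p₁, …, p_N} is invariant under each S_j, i.e. S_j '' Δ ⊆ Δ for every 1 ≤ j ≤ N; consequently every nonempty compact set X with X = ⋃_{j=1}^N S_j '' X satisfies X ⊆ Δ. (Supporting claim used in the proof of Lemma 2.8.) -/

import Mathlib

open Set Filter

noncomputable section

abbrev E (N : ℕ) := EuclideanSpace ℝ (Fin N)

/-- Vertex `p_j` of the regular simplex. -/
def gPt (N : ℕ) (j : Fin N) : E N :=
  (Real.sqrt 2)⁻¹ • (EuclideanSpace.single j (1 : ℝ) -
    (N : ℝ)⁻¹ • ∑ i : Fin N, EuclideanSpace.single i (1 : ℝ))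

/-- The affine map `S_j`. -/
def gS (N : ℕ) (j : Fin N) (x : E N) : E N :=
  ((N : ℝ) + 2)⁻¹ • x +
    (((N : ℝ) + 2)⁻¹ * (2 + ((N : ℝ) - 1) * (inner ℝ x (gPt N j) : ℝ) / ‖gPt N j‖ ^ 2)) • gPt N j

lemma inner_gPt (N : ℕ) (hN : 1 ≤ N) (i j : Fin N) :
    (inner ℝ (gPt N i) (gPt N j) : ℝ) = ((if i = j then (1:ℝ) else 0) - (N:ℝ)⁻¹)/2 := by
  have hN0 : (N:ℝ) ≠ 0 := by positivity
  have h2 : ((Real.sqrt 2)⁻¹ : ℝ) * (Real.sqrt 2)⁻¹ = 2⁻¹ := by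
    rw [← mul_inv, Real.mul_self_sqrt (by norm_num)]
  set u : E N := ∑ i : Fin N, EuclideanSpace.single i (1 : ℝ) with hu
  have hsu : ∀ k : Fin N, (inner ℝ (EuclideanSpace.single k (1:ℝ)) u : ℝ) = 1 := by
    intro k
    simp [hu, inner_sum, EuclideanSpace.inner_single_left, EuclideanSpace.single_apply]
  have hus : ∀ k : Fin N, (inner ℝ u (EuclideanSpace.single k (1:ℝ)) : ℝ) = 1 := by
    intro k; rw [real_inner_comm]; exact hsu k
  have huu : (inner ℝ u u : ℝ) = N := by
    rw [hu, sum_inner]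
    simp only [← hu, hsu]
    simp
  have hss : (inner ℝ (EuclideanSpace.single i (1:ℝ)) (EuclideanSpace.single j (1:ℝ)) : ℝ)
      = if i = j then 1 else 0 := by
    simp [EuclideanSpace.inner_single_left, EuclideanSpace.single_apply, eq_comm]
  rw [gPt, gPt, real_inner_smul_left, real_inner_smul_right, inner_sub_left, inner_sub_right,
    inner_sub_right, real_inner_smul_right, real_inner_smul_right, real_inner_smul_left,
    real_inner_smul_left, hss, hsu, hus, huu]
  field_simp
  ring_nf
  rw [Real.sq_sqrt (by norm_num : (2:ℝ) ≥ 0)]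
  ring

lemma norm_sq_gPt (N : ℕ) (hN : 1 ≤ N) (j : Fin N) :
    ‖gPt N j‖ ^ 2 = ((N:ℝ) - 1) / (2 * N) := by
  rw [← real_inner_self_eq_norm_sq, inner_gPt N hN j j]
  simp
  field_simp

lemma gPt_ne_zero (N : ℕ) (hN : 2 ≤ N) (j : Fin N) : gPt N j ≠ 0 := by
  intro h
  have h1 := norm_sq_gPt N (by omega) j
  rw [h] at h1
  have h2 : ((N:ℝ) - 1) / (2 * N) > 0 := by
    apply div_pos <;> [skip; positivity]
    have : (2:ℝ) ≤ N := by exact_mod_cast hN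
    linarith
  simp at h1
  rw [← h1] at h2
  simp at h2

lemma sum_gPt (N : ℕ) (hN : 1 ≤ N) : ∑ i : Fin N, gPt N i = 0 := by
  simp only [gPt, ← Finset.smul_sum]
  rw [Finset.sum_sub_distrib]
  rw [Finset.sum_const, Finset.card_univ, Fintype.card_fin]
  rw [smul_eq_zero]
  right
  rw [sub_eq_zero, ← Nat.cast_smul_eq_nsmul ℝ, smul_smul]
  rw [mul_inv_cancel₀ (by positivity : (N:ℝ) ≠ 0), one_smul]

def gL (N : ℕ) (j : Fin N) : E N →ₗ[ℝ] E N :=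
  ((N : ℝ) + 2)⁻¹ • LinearMap.id +
    (((N : ℝ) + 2)⁻¹ * (((N : ℝ) - 1) / ‖gPt N j‖ ^ 2)) •
      ((LinearMap.toSpanSingleton ℝ (E N) (gPt N j)).comp
        ((innerₛₗ ℝ (gPt N j)).comp (LinearMap.id)))

lemma gS_eq (N : ℕ) (j : Fin N) (x : E N) :
    gS N j x = gL N j x + (2 * ((N : ℝ) + 2)⁻¹) • gPt N j := by
  simp only [gS, gL, LinearMap.add_apply, LinearMap.smul_apply, LinearMap.id_apply,
    LinearMap.comp_apply, LinearMap.toSpanSingleton_apply, innerₛₗ_apply_apply]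
  rw [real_inner_comm (gPt N j) x]
  rw [smul_smul]
  rw [add_assoc]
  congr 1
  rw [← add_smul]
  congr 1
  ring

def gSA (N : ℕ) (j : Fin N) : E N →ᵃ[ℝ] E N :=
  AffineMap.mk' (gS N j) (gL N j) 0 (fun x => by
    simp only [vsub_eq_sub, sub_zero, vadd_eq_add, gS_eq]
    have h0 : gL N j (0 : E N) = 0 := map_zero _
    rw [h0, zero_add])

lemma gS_vertex (N : ℕ) (hN : 2 ≤ N) (i j : Fin N) :
    gS N j (gPt N i) = if i = j then gPt N j
      else ((N:ℝ)+2)⁻¹ • gPt N i + ((N:ℝ)+2)⁻¹ • gPt N j := by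
  have h1 : (1:ℕ) ≤ N := by omega
  have hN1 : (N:ℝ) - 1 ≠ 0 := by
    have : (2:ℝ) ≤ N := by exact_mod_cast hN
    intro h; linarith
  have hN0 : (N:ℝ) ≠ 0 := by positivity
  rw [gS, inner_gPt N h1, norm_sq_gPt N h1]
  by_cases h : i = j
  · subst h
    simp only [if_true]
    have : ((N:ℝ) + 2)⁻¹ * (2 + ((N:ℝ) - 1) * (((1:ℝ) - (N:ℝ)⁻¹)/2) / (((N:ℝ)-1)/(2*N)))
        = ((N:ℝ)+2)⁻¹ * ((N:ℝ)+1) := by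
      field_simp
      ring
    rw [this, ← add_smul]
    have : ((N:ℝ)+2)⁻¹ + ((N:ℝ)+2)⁻¹ * ((N:ℝ)+1) = 1 := by
      field_simp; ring
    rw [this, one_smul]
  · simp only [h, if_false]
    congr 1
    have : ((N:ℝ) + 2)⁻¹ * (2 + ((N:ℝ) - 1) * (((0:ℝ) - (N:ℝ)⁻¹)/2) / (((N:ℝ)-1)/(2*N)))
        = ((N:ℝ)+2)⁻¹ := by
      field_simp
      ring
    rw [this]

lemma gS_lip (N : ℕ) (hN : 2 ≤ N) (j : Fin N) (x y : E N) :
    ‖gS N j x - gS N j y‖ ≤ ((N:ℝ)/((N:ℝ)+2)) * ‖x - y‖ := by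
  have hp : gPt N j ≠ 0 := gPt_ne_zero N hN j
  have hpn : (0:ℝ) < ‖gPt N j‖ := norm_pos_iff.mpr hp
  have hc : (0:ℝ) < (N:ℝ) + 2 := by positivity
  set c : ℝ := ((N:ℝ)+2)⁻¹ with hcdef
  set p : E N := gPt N j with hpdef
  set v : E N := x - y with hv
  have key : gS N j x - gS N j y
      = c • v + (c * (((N:ℝ)-1) * (inner ℝ v p : ℝ) / ‖p‖^2)) • p := by
    simp only [gS, hv, ← hpdef, ← hcdef, inner_sub_left]
    match_scalars <;> field_simp <;> ring
  rw [key]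
  have hCS : |(inner ℝ v p : ℝ)| ≤ ‖v‖ * ‖p‖ := abs_real_inner_le_norm v p
  have hN1 : (0:ℝ) ≤ (N:ℝ) - 1 := by
    have : (2:ℝ) ≤ N := by exact_mod_cast hN
    linarith
  calc ‖c • v + (c * (((N:ℝ)-1) * (inner ℝ v p : ℝ) / ‖p‖^2)) • p‖
      ≤ ‖c • v‖ + ‖(c * (((N:ℝ)-1) * (inner ℝ v p : ℝ) / ‖p‖^2)) • p‖ := norm_add_le _ _
    _ = c * ‖v‖ + |c * (((N:ℝ)-1) * (inner ℝ v p : ℝ) / ‖p‖^2)| * ‖p‖ := by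
        rw [norm_smul, norm_smul, Real.norm_eq_abs, Real.norm_eq_abs,
          abs_of_pos (by positivity : (0:ℝ) < c)]
    _ ≤ c * ‖v‖ + (c * (((N:ℝ)-1) * (‖v‖ * ‖p‖) / ‖p‖^2)) * ‖p‖ := by
        gcongr
        rw [abs_mul, abs_of_pos (by positivity : (0:ℝ) < c)]
        gcongr
        rw [abs_div, abs_mul, abs_of_nonneg hN1, abs_of_nonneg (by positivity : (0:ℝ) ≤ ‖p‖^2)]
        gcongr
    _ = (1 + ((N:ℝ)-1)) * c * ‖v‖ := by
        field_simp
    _ = ((N:ℝ)/((N:ℝ)+2)) * ‖v‖ := by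
        rw [hcdef]
        field_simp
        ring

lemma zero_mem_hull (N : ℕ) (hN : 2 ≤ N) :
    (0 : E N) ∈ convexHull ℝ (Set.range (gPt N)) := by
  have hNpos : (0:ℝ) < N := by positivity
  have h := Finset.centerMass_mem_convexHull (Finset.univ : Finset (Fin N))
    (w := fun _ => (1:ℝ)) (z := gPt N) (fun i _ => zero_le_one)
    (by simpa using hNpos) (fun i _ => Set.mem_range_self i)
  rw [Finset.centerMass] at h
  simp only [one_smul] at h
  rwa [sum_gPt N (by omega), smul_zero] at h

lemma part1 (N : ℕ) (hN : 2 ≤ N) (j : Fin N) :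
    gS N j '' convexHull ℝ (Set.range (gPt N)) ⊆ convexHull ℝ (Set.range (gPt N)) := by
  have hco : ⇑(gSA N j) = gS N j := AffineMap.coe_mk' _ _ _ _
  rw [← hco, AffineMap.image_convexHull]
  apply convexHull_min _ (convex_convexHull ℝ _)
  rintro _ ⟨_, ⟨i, rfl⟩, rfl⟩
  rw [hco, gS_vertex N hN]
  by_cases h : i = j
  · simp only [h, if_true]
    exact subset_convexHull ℝ _ ⟨j, rfl⟩
  · simp only [h, if_false]
    have C := convex_convexHull ℝ (Set.range (gPt N))
    have hpi : gPt N i ∈ convexHull ℝ (Set.range (gPt N)) := subset_convexHull ℝ _ ⟨i, rfl⟩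
    have hpj : gPt N j ∈ convexHull ℝ (Set.range (gPt N)) := subset_convexHull ℝ _ ⟨j, rfl⟩
    have hq : (1/2 : ℝ) • gPt N i + (1/2 : ℝ) • gPt N j ∈ convexHull ℝ (Set.range (gPt N)) :=
      C hpi hpj (by norm_num) (by norm_num) (by norm_num)
    have h0 := zero_mem_hull N hN
    have hc2 : (0:ℝ) ≤ 2 * ((N:ℝ)+2)⁻¹ := by positivity
    have hc3 : (0:ℝ) ≤ 1 - 2 * ((N:ℝ)+2)⁻¹ := by
      have h1 : (0:ℝ) < (N:ℝ) + 2 := by positivity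
      rw [sub_nonneg, ← div_eq_mul_inv, div_le_one h1]
      have : (0:ℝ) ≤ N := by positivity
      linarith
    have hmem := C hq h0 hc2 hc3 (by ring)
    have heq : (2 * ((N:ℝ)+2)⁻¹) • ((1/2 : ℝ) • gPt N i + (1/2 : ℝ) • gPt N j)
        + (1 - 2 * ((N:ℝ)+2)⁻¹) • (0 : E N)
        = ((N:ℝ)+2)⁻¹ • gPt N i + ((N:ℝ)+2)⁻¹ • gPt N j := by
      rw [smul_zero, add_zero, smul_add, smul_smul, smul_smul,
        show 2*((N:ℝ)+2)⁻¹*(1/2) = ((N:ℝ)+2)⁻¹ by ring]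
    rwa [heq] at hmem


/-- the simplex `Δ = convexHull {p₁,…,p_N}` is invariant under each `S_j`;
consequently any nonempty compact set invariant under all the `S_j` is contained in `Δ`. -/
theorem simplex_invariant (N : ℕ) (hN : 2 ≤ N) :
    (∀ j : Fin N, gS N j '' convexHull ℝ (Set.range (gPt N)) ⊆
      convexHull ℝ (Set.range (gPt N))) ∧
    ∀ X : Set (E N), X.Nonempty → IsCompact X → X = ⋃ j : Fin N, gS N j '' X →
      X ⊆ convexHull ℝ (Set.range (gPt N)) := by
  refine ⟨part1 N hN, ?_⟩
  intro X hne hcomp hX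
  set Δ := convexHull ℝ (Set.range (gPt N)) with hΔ
  have hΔc : IsCompact Δ := (Set.finite_range (gPt N)).isCompact_convexHull ℝ
  have hΔne : Δ.Nonempty := ⟨gPt N ⟨0, by omega⟩, subset_convexHull ℝ _ ⟨_, rfl⟩⟩
  have hΔcl : IsClosed Δ := hΔc.isClosed
  have hcont : ContinuousOn (fun x => Metric.infDist x Δ) X :=
    (Metric.continuous_infDist_pt Δ).continuousOn
  obtain ⟨x₀, hx₀X, hmax⟩ := hcomp.exists_isMaxOn hne hcont
  have hr : (0:ℝ) < (N:ℝ) + 2 := by positivity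
  have hrlt : (N:ℝ)/((N:ℝ)+2) < 1 := by
    rw [div_lt_one hr]; linarith
  have h0 : Metric.infDist x₀ Δ = 0 := by
    have hx₀' : x₀ ∈ ⋃ j, gS N j '' X := hX ▸ hx₀X
    simp only [Set.mem_iUnion, Set.mem_image] at hx₀'
    obtain ⟨j, y, hyX, hyeq⟩ := hx₀'
    obtain ⟨z, hzΔ, hz⟩ := hΔc.exists_infDist_eq_dist hΔne y
    have hSz : gS N j z ∈ Δ := part1 N hN j ⟨z, hzΔ, rfl⟩
    have h1 : Metric.infDist x₀ Δ ≤ dist (gS N j y) (gS N j z) := by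
      rw [← hyeq]; exact Metric.infDist_le_dist_of_mem hSz
    have h2 : dist (gS N j y) (gS N j z) ≤ ((N:ℝ)/((N:ℝ)+2)) * dist y z := by
      rw [dist_eq_norm, dist_eq_norm]; exact gS_lip N hN j y z
    have h3 : dist y z = Metric.infDist y Δ := hz.symm
    have h4 : Metric.infDist y Δ ≤ Metric.infDist x₀ Δ := hmax hyX
    have h5 : Metric.infDist x₀ Δ ≤ ((N:ℝ)/((N:ℝ)+2)) * Metric.infDist x₀ Δ := by
      calc Metric.infDist x₀ Δ ≤ ((N:ℝ)/((N:ℝ)+2)) * dist y z := h1.trans h2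
        _ ≤ ((N:ℝ)/((N:ℝ)+2)) * Metric.infDist x₀ Δ := by
            rw [h3]; gcongr
    have h6 : (0:ℝ) ≤ Metric.infDist x₀ Δ := Metric.infDist_nonneg
    nlinarith
  intro x hx
  have h7 : Metric.infDist x Δ = 0 :=
    le_antisymm ((hmax hx).trans h0.le) Metric.infDist_nonneg
  exact (hΔcl.mem_iff_infDist_zero hΔne).mpr h7
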